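/- Let V be a multiplicative partial isometry on H⊗H and define Δ(X) = V(X⊗1)V* for X ∈ L(H). Then for every ω ∈ L(H)*, Δ(λ(ω)) lies in A⊗A, where λ(ω) = (ω⊗id)(V) and A = λ(L(H)*) is the right leg of V. -/

import Mathlib

open Matrix

namespace MPIpaper

variable {n : Type*} [Fintype n] [DecidableEq n]

noncomputable section

/-- `W₁₂ = W ⊗ 1` on `H ⊗ H ⊗ H`. -/
def leg12 (V : Matrix (n × n) (n × n) ℂ) : Matrix (n × n × n) (n × n × n) ℂ :=
  Matrix.of fun p q => V (p.1, p.2.1) (q.1, q.2.1) * (if p.2.2 = q.2.2 then (1 : ℂ) else 0)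

/-- `W₂₃ = 1 ⊗ W` on `H ⊗ H ⊗ H`. -/
def leg23 (V : Matrix (n × n) (n × n) ℂ) : Matrix (n × n × n) (n × n × n) ℂ :=
  Matrix.of fun p q => (if p.1 = q.1 then (1 : ℂ) else 0) * V p.2 q.2

/-- `W₁₃ = (1⊗Σ)(W⊗1)(1⊗Σ)` on `H ⊗ H ⊗ H`. -/
def leg13 (V : Matrix (n × n) (n × n) ℂ) : Matrix (n × n × n) (n × n × n) ℂ :=
  Matrix.of fun p q => V (p.1, p.2.2) (q.1, q.2.2) * (if p.2.1 = q.2.1 then (1 : ℂ) else 0)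

/-- A multiplicative partial isometry: `VV*V = V`, the pentagon equation, and the
three auxiliary (hexagon-type) equations. -/
def IsMPI (V : Matrix (n × n) (n × n) ℂ) : Prop :=
  V * Vᴴ * V = V ∧
  leg23 V * leg12 V = leg12 V * leg13 V * leg23 V ∧
  leg13 V * leg23 V * (leg23 V)ᴴ = (leg12 V)ᴴ * leg12 V * leg13 V ∧
  leg12 V * (leg12 V)ᴴ * leg23 V = leg23 V * leg12 V * (leg12 V)ᴴ ∧
  leg12 V * (leg23 V)ᴴ * leg23 V = (leg23 V)ᴴ * leg23 V * leg12 V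

/-- `λ(ω) = (ω ⊗ id)(V)`. -/
def lam (ω : Matrix n n ℂ →ₗ[ℂ] ℂ) (V : Matrix (n × n) (n × n) ℂ) : Matrix n n ℂ :=
  Matrix.of fun i j => ω (Matrix.of fun a b => V (a, i) (b, j))

/-- `ρ(ω) = (id ⊗ ω)(V)`. -/
def rho (ω : Matrix n n ℂ →ₗ[ℂ] ℂ) (V : Matrix (n × n) (n × n) ℂ) : Matrix n n ℂ :=
  Matrix.of fun i j => ω (Matrix.of fun a b => V (i, a) (j, b))

/-- `1 ⊗ X` on `H ⊗ H`. -/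
def oneTensor (X : Matrix n n ℂ) : Matrix (n × n) (n × n) ℂ :=
  Matrix.of fun p q => (if p.1 = q.1 then (1 : ℂ) else 0) * X p.2 q.2

/-- `X ⊗ 1` on `H ⊗ H`. -/
def tensorOne (X : Matrix n n ℂ) : Matrix (n × n) (n × n) ℂ :=
  Matrix.of fun p q => X p.1 q.1 * (if p.2 = q.2 then (1 : ℂ) else 0)

/-- `Δ(X) = V (X ⊗ 1) V*`. -/
def Delta (V : Matrix (n × n) (n × n) ℂ) (X : Matrix n n ℂ) : Matrix (n × n) (n × n) ℂ :=
  V * tensorOne X * Vᴴ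

/-- `Δ̂(X) = V* (1 ⊗ X) V`. -/
def hatDelta (V : Matrix (n × n) (n × n) ℂ) (X : Matrix n n ℂ) : Matrix (n × n) (n × n) ℂ :=
  Vᴴ * oneTensor X * V

/-- `(ω ⊗ ω')(W)` for an operator `W` on `H ⊗ H`. -/
def applyBoth (ω ω' : Matrix n n ℂ →ₗ[ℂ] ℂ) (W : Matrix (n × n) (n × n) ℂ) : ℂ :=
  ω (Matrix.of fun i j => ω' (Matrix.of fun k l => W (i, k) (j, l)))

end


noncomputable section

/-- apply `ω` to the first leg of an operator on `H ⊗ H ⊗ H`. -/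
def slice (ω : Matrix n n ℂ →ₗ[ℂ] ℂ) (W : Matrix (n × n × n) (n × n × n) ℂ) :
    Matrix (n × n) (n × n) ℂ :=
  Matrix.of fun p q => ω (Matrix.of fun a b => W (a, p.1, p.2) (b, q.1, q.2))

/-- evaluation functional `X ↦ X a c`. -/
def eps (a c : n) : Matrix n n ℂ →ₗ[ℂ] ℂ :=
  ⟨⟨fun X => X a c, fun _ _ => rfl⟩, fun _ _ => rfl⟩

end

set_option linter.unusedSectionVars false

lemma leg12_mul (A B : Matrix (n × n) (n × n) ℂ) : leg12 (A * B) = leg12 A * leg12 B := by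
  ext ⟨p1, p2, p3⟩ ⟨q1, q2, q3⟩
  simp [leg12, Matrix.mul_apply, Fintype.sum_prod_type, mul_ite, ite_mul,
    Finset.sum_ite_eq, Finset.sum_ite_eq', Finset.mul_sum]

lemma leg12_conjT (A : Matrix (n × n) (n × n) ℂ) : (leg12 A)ᴴ = leg12 Aᴴ := by
  ext ⟨p1, p2, p3⟩ ⟨q1, q2, q3⟩
  by_cases h : p3 = q3 <;>
    simp [leg12, Matrix.conjTranspose_apply, h, eq_comm]

lemma slice_leg23_mul (ω : Matrix n n ℂ →ₗ[ℂ] ℂ) (V : Matrix (n × n) (n × n) ℂ)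
    (Y : Matrix (n × n × n) (n × n × n) ℂ) :
    slice ω (leg23 V * Y) = V * slice ω Y := by
  ext p q
  have h1 : (Matrix.of fun a b => (leg23 V * Y) (a, p.1, p.2) (b, q.1, q.2))
      = ∑ r : n × n, V p r • Matrix.of fun a b => Y (a, r.1, r.2) (b, q.1, q.2) := by
    ext a b
    simp [leg23, Matrix.mul_apply, Fintype.sum_prod_type, Matrix.sum_apply, ite_mul,
      Finset.sum_ite_eq, Finset.sum_ite_eq']
  simp only [slice, Matrix.of_apply]
  rw [h1, map_sum]
  simp only [_root_.map_smul, smul_eq_mul, Matrix.mul_apply, slice, Matrix.of_apply]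

lemma slice_mul_leg23T (ω : Matrix n n ℂ →ₗ[ℂ] ℂ) (V : Matrix (n × n) (n × n) ℂ)
    (Y : Matrix (n × n × n) (n × n × n) ℂ) :
    slice ω (Y * (leg23 V)ᴴ) = slice ω Y * Vᴴ := by
  ext p q
  have h1 : (Matrix.of fun a b => (Y * (leg23 V)ᴴ) (a, p.1, p.2) (b, q.1, q.2))
      = ∑ r : n × n, (starRingEnd ℂ) (V q r) •
          Matrix.of fun a b => Y (a, p.1, p.2) (b, r.1, r.2) := by
    ext a b
    simp [leg23, Matrix.mul_apply, Matrix.conjTranspose_apply, Fintype.sum_prod_type,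
      Matrix.sum_apply, apply_ite, ite_mul, mul_ite, Finset.sum_ite_eq, Finset.sum_ite_eq',
      mul_comm]
  simp only [slice, Matrix.of_apply]
  rw [h1, map_sum]
  simp only [_root_.map_smul, smul_eq_mul, Matrix.mul_apply, slice, Matrix.of_apply,
    Matrix.conjTranspose_apply]
  exact Finset.sum_congr rfl fun r _ => mul_comm _ _

lemma slice_leg12 (ω : Matrix n n ℂ →ₗ[ℂ] ℂ) (V : Matrix (n × n) (n × n) ℂ) :
    slice ω (leg12 V) = tensorOne (lam ω V) := by
  have h0 : (Matrix.of fun (_ _ : n) => (0 : ℂ)) = (0 : Matrix n n ℂ) := rfl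
  ext p q
  by_cases h : p.2 = q.2 <;>
    simp [slice, leg12, tensorOne, lam, h, h0]

lemma omega_expand (ω : Matrix n n ℂ →ₗ[ℂ] ℂ) (M : Matrix n n ℂ) :
    ω M = ∑ a : n, ∑ b : n, M a b * ω (Matrix.single a b 1) := by
  conv_lhs => rw [Matrix.matrix_eq_sum_single M]
  rw [map_sum]
  refine Finset.sum_congr rfl fun a _ => ?_
  rw [map_sum]
  refine Finset.sum_congr rfl fun b _ => ?_
  have h : Matrix.single a b (M a b) = M a b • Matrix.single a b (1 : ℂ) := by
    ext x y
    simp [Matrix.single]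
  rw [h, _root_.map_smul, smul_eq_mul]

lemma hleg (V : Matrix (n × n) (n × n) ℂ) (hV : IsMPI V) :
    leg23 V * leg12 V * (leg23 V)ᴴ = leg12 V * leg13 V := by
  have h12 : leg12 V * (leg12 V)ᴴ * leg12 V = leg12 V := by
    rw [leg12_conjT, ← leg12_mul, ← leg12_mul, hV.1]
  calc leg23 V * leg12 V * (leg23 V)ᴴ
      = leg12 V * leg13 V * leg23 V * (leg23 V)ᴴ := by rw [hV.2.1]
    _ = leg12 V * (leg13 V * leg23 V * (leg23 V)ᴴ) := by simp only [mul_assoc]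
    _ = leg12 V * ((leg12 V)ᴴ * leg12 V * leg13 V) := by rw [hV.2.2.1]
    _ = leg12 V * (leg12 V)ᴴ * leg12 V * leg13 V := by simp only [mul_assoc]
    _ = leg12 V * leg13 V := by rw [h12]

lemma slice_leg12_leg13 (ω : Matrix n n ℂ →ₗ[ℂ] ℂ) (V : Matrix (n × n) (n × n) ℂ) :
    slice ω (leg12 V * leg13 V)
      = ∑ a : n, ∑ b : n, ∑ c : n, ω (Matrix.single a b 1) •
          Matrix.kroneckerMap (· * ·) (lam (eps a c) V) (lam (eps c b) V) := by
  ext ⟨i, k⟩ ⟨j, l⟩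
  have h1 : (Matrix.of fun a b => (leg12 V * leg13 V) (a, i, k) (b, j, l))
      = ∑ c : n, Matrix.of fun a b => V (a, i) (c, j) * V (c, k) (b, l) := by
    ext a b
    simp [leg12, leg13, Matrix.mul_apply, Fintype.sum_prod_type, Matrix.sum_apply,
      mul_ite, ite_mul, Finset.sum_ite_eq, Finset.sum_ite_eq']
  simp only [slice, Matrix.of_apply]
  rw [h1, map_sum]
  have h2 : ∀ c : n, ω (Matrix.of fun a b => V (a, i) (c, j) * V (c, k) (b, l))
      = ∑ a : n, ∑ b : n, (V (a, i) (c, j) * V (c, k) (b, l)) *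
          ω (Matrix.single a b 1) := by
    intro c
    exact omega_expand ω _
  simp only [h2]
  have hcomm : ∀ f : n → n → n → ℂ,
      (∑ c : n, ∑ a : n, ∑ b : n, f c a b) = ∑ a : n, ∑ b : n, ∑ c : n, f c a b := by
    intro f
    rw [Finset.sum_comm]
    exact Finset.sum_congr rfl fun a _ => Finset.sum_comm
  rw [hcomm]
  simp only [Matrix.sum_apply, Matrix.smul_apply, Matrix.kroneckerMap_apply, smul_eq_mul]
  refine Finset.sum_congr rfl fun a _ => Finset.sum_congr rfl fun b _ =>
    Finset.sum_congr rfl fun c _ => ?_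
  simp only [lam, eps, LinearMap.coe_mk, AddHom.coe_mk, Matrix.of_apply]
  change V (a, i) (c, j) * V (c, k) (b, l) * ω (Matrix.single a b 1) =
    ω (Matrix.single a b 1) * (V (a, i) (c, j) * V (c, k) (b, l))
  ring

theorem statement8 (V : Matrix (n × n) (n × n) ℂ) (hV : IsMPI V)
    (ω : Matrix n n ℂ →ₗ[ℂ] ℂ) :
    Delta V (lam ω V) ∈
      Submodule.span ℂ {M : Matrix (n × n) (n × n) ℂ |
        ∃ ω₁ ω₂ : Matrix n n ℂ →ₗ[ℂ] ℂ,
          M = Matrix.kroneckerMap (· * ·) (lam ω₁ V) (lam ω₂ V)} := by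
  have key : Delta V (lam ω V)
      = ∑ a : n, ∑ b : n, ∑ c : n, ω (Matrix.single a b 1) •
          Matrix.kroneckerMap (· * ·) (lam (eps a c) V) (lam (eps c b) V) := by
    have h : Delta V (lam ω V) = slice ω (leg23 V * leg12 V * (leg23 V)ᴴ) := by
      rw [mul_assoc, slice_leg23_mul, slice_mul_leg23T, slice_leg12, Delta, mul_assoc]
    rw [h, hleg V hV, slice_leg12_leg13]
  rw [key]
  refine Submodule.sum_mem _ fun a _ => Submodule.sum_mem _ fun b _ => Submodule.sum_mem _
    fun c _ => Submodule.smul_mem _ _ (Submodule.subset_span ⟨eps a c, eps c b, rfl⟩)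

end MPIpaper
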